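/- Let ρ(x, y) be an L₂-formula with two free variables such that for every dimension n ≥ 1 the binary relation R_n = {(e, e') | B_n ⊨ ρ(e, e')} on partial instances of dimension n is irreflexive and transitive. Then for every n ≥ 1 and all partial instances e₁, e₂ of dimension n such that e₁ and e₂ have the same number of coordinates equal to some false, the same number of coordinates equal to some true, and the same number of coordinates equal to none, it holds that (e₁, e₂) ∉ R_n. -/
import Mathlib

open FirstOrder FirstOrder.Language

abbrev PI (n : ℕ) : Type := Fin n → Option Bool

def Subs {n : ℕ} (e e' : PI n) : Prop := ∀ i, e i ≠ none → e' i = e i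

noncomputable def undefCard {n : ℕ} (e : PI n) : ℕ := Set.ncard {i | e i = none}

/-- `e ⪯ e'` iff `|e_⊥| ≥ |e'_⊥|`. -/
def Lel {n : ℕ} (e e' : PI n) : Prop := undefCard e' ≤ undefCard e

/-- The language `L₂` with two binary relation symbols (indexed by `Bool`). -/
def l2Lang : Language where
  Functions _ := Empty
  Relations n := match n with
    | 2 => Bool
    | _ => Empty

/-- The structure `B_n`: partial instances of dimension `n`, with the first binary symbol
interpreted as subsumption `⊑` and the second as `⪯`. -/
instance l2Struct (n : ℕ) : l2Lang.Structure (PI n) where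
  funMap := fun {_} f => f.elim
  RelMap := fun {k} r v => match k, r with
    | 2, false => Subs (v 0) (v 1)
    | 2, true => Lel (v 0) (v 1)

/-- The number of coordinates of `e` equal to `a`. -/
noncomputable def cnt {n : ℕ} (e : PI n) (a : Option Bool) : ℕ := Set.ncard {i | e i = a}

lemma undefCard_comp {n : ℕ} (e : PI n) (σ : Equiv.Perm (Fin n)) :
    undefCard (e ∘ σ) = undefCard e := by
  unfold undefCard
  have h : {i | (e ∘ σ) i = none} = σ.symm '' {i | e i = none} := by
    ext i
    simp only [Set.mem_setOf_eq, Function.comp_apply, Set.mem_image]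
    constructor
    · intro hi; exact ⟨σ i, hi, by simp⟩
    · rintro ⟨j, hj, rfl⟩; simpa using hj
  rw [h, Set.ncard_image_of_injective _ σ.symm.injective]

/-- Precomposition by a permutation is an `L₂`-automorphism of `B_n`. -/
noncomputable def permAut (n : ℕ) (σ : Equiv.Perm (Fin n)) : PI n ≃[l2Lang] PI n where
  toEquiv := Equiv.arrowCongr σ.symm (Equiv.refl _)
  map_fun' := fun f _ => f.elim
  map_rel' := by
    intro k r x
    match k, r with
    | 2, false =>
      show Subs ((x 0) ∘ σ) ((x 1) ∘ σ) ↔ Subs (x 0) (x 1)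
      constructor
      · intro h i hi
        have := h (σ.symm i) (by simpa using hi)
        simpa using this
      · intro h i hi
        exact h (σ i) hi
    | 2, true =>
      show Lel ((x 0) ∘ σ) ((x 1) ∘ σ) ↔ Lel (x 0) (x 1)
      unfold Lel
      rw [undefCard_comp, undefCard_comp]

theorem stmt9 (ρ : l2Lang.Formula (Fin 2))
    (hpo : ∀ n : ℕ, 1 ≤ n →
      (∀ e : PI n, ¬ ρ.Realize ![e, e]) ∧
      (∀ e₁ e₂ e₃ : PI n,
        ρ.Realize ![e₁, e₂] → ρ.Realize ![e₂, e₃] → ρ.Realize ![e₁, e₃])) :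
    ∀ n : ℕ, 1 ≤ n → ∀ e₁ e₂ : PI n,
      cnt e₁ (some false) = cnt e₂ (some false) →
      cnt e₁ (some true) = cnt e₂ (some true) →
      cnt e₁ none = cnt e₂ none →
      ¬ ρ.Realize ![e₁, e₂] := by
  intro n hn e₁ e₂ hf ht h0 hρ
  obtain ⟨hirr, htrans⟩ := hpo n hn
  -- counts agree for every value
  have hcnt : ∀ a : Option Bool, cnt e₂ a = cnt e₁ a := by
    rintro (_ | _ | _)
    · exact h0.symm
    · exact hf.symm
    · exact ht.symm
  -- build a permutation σ with e₁ ∘ σ = e₂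
  have hfib : ∀ a : Option Bool,
      Fintype.card {i // e₂ i = a} = Fintype.card {i // e₁ i = a} := by
    intro a
    have h2 : Fintype.card {i // e₂ i = a} = cnt e₂ a := by
      rw [cnt, ← Nat.card_coe_set_eq, Nat.card_eq_fintype_card]
      rfl
    have h1 : Fintype.card {i // e₁ i = a} = cnt e₁ a := by
      rw [cnt, ← Nat.card_coe_set_eq, Nat.card_eq_fintype_card]
      rfl
    rw [h1, h2, hcnt]
  let σ : Equiv.Perm (Fin n) :=
    Equiv.ofFiberEquiv (f := e₂) (g := e₁) fun a => Fintype.equivOfCardEq (hfib a)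
  have hσ : e₁ ∘ σ = e₂ := funext fun i => Equiv.ofFiberEquiv_map _ i
  -- the automorphism
  set g := permAut n σ with hg
  have hmap : ∀ e : PI n, g e = e ∘ σ := by
    intro e; rfl
  -- iterate: ρ (e₁ ∘ σ^k) (e₁ ∘ σ^(k+1))
  have step : ∀ k : ℕ, ρ.Realize ![e₁ ∘ (σ ^ k : Equiv.Perm (Fin n)), e₁ ∘ (σ ^ (k+1) : Equiv.Perm (Fin n))] := by
    intro k
    induction k with
    | zero => simpa [pow_succ, ← hσ] using hρ
    | succ k ih =>
      have := (StrongHomClass.realize_formula g (v := ![e₁ ∘ (σ ^ k : Equiv.Perm (Fin n)), e₁ ∘ (σ ^ (k+1) : Equiv.Perm (Fin n))]) ρ).mpr ih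
      have hcomp : (g ∘ ![e₁ ∘ (σ ^ k : Equiv.Perm (Fin n)), e₁ ∘ (σ ^ (k+1) : Equiv.Perm (Fin n))]) =
          ![e₁ ∘ (σ ^ (k+1) : Equiv.Perm (Fin n)), e₁ ∘ (σ ^ (k+2) : Equiv.Perm (Fin n))] := by
        funext j
        fin_cases j <;> simp [hmap, pow_succ] <;> rfl
      rwa [hcomp] at this
  -- transitivity: ρ e₁ (e₁ ∘ σ^m) for m ≥ 1
  have chain : ∀ m : ℕ, ρ.Realize ![e₁, e₁ ∘ ((σ ^ (m+1) : Equiv.Perm (Fin n)))] := by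
    intro m
    induction m with
    | zero => simpa [← hσ] using hρ
    | succ m ih => exact htrans _ _ _ ih (step (m+1))
  have hord : σ ^ (orderOf σ) = 1 := pow_orderOf_eq_one σ
  have hpos : 0 < orderOf σ := orderOf_pos σ
  have := chain (orderOf σ - 1)
  rw [Nat.sub_add_cancel hpos, hord] at this
  exact hirr e₁ (by simpa using this)
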